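/- For every integer sequence x (indexed from 1) satisfying the Fibonacci recurrence x_j = x_{j-1} + x_{j-2} for all j ≥ 3, the following hold: (i) x_1 + x_2 + x_3 = 2·x_3, and (ii) for every natural number k ≥ 0, the sum of the first 4k+2 terms equals L_{2k+1} times the (2k+3)rd term, i.e., ∑_{i=1}^{4k+2} x_i = L_{2k+1} · x_{2k+3}. -/

import Mathlib

/-- The Lucas numbers: L 0 = 2, L 1 = 1, L (n+2) = L (n+1) + L n. -/
def lucas : ℕ → ℕ
  | 0 => 2
  | 1 => 1
  | n + 2 => lucas n + lucas (n + 1)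

lemma lucas_eq_fib (n : ℕ) : lucas (n + 1) = Nat.fib n + Nat.fib (n + 2) := by
  induction n using Nat.twoStepInduction with
  | zero => rfl
  | one => rfl
  | more n ih1 ih2 =>
    show lucas (n + 1) + lucas (n + 2) = _
    rw [ih1, ih2]
    have f1 := Nat.fib_add_two (n := n)
    have f2 := Nat.fib_add_two (n := n + 1)
    have f3 := Nat.fib_add_two (n := n + 2)
    simp only [show n + 1 + 2 = n + 3 from rfl, show n + 2 + 2 = n + 4 from rfl,
      show n + 1 + 1 = n + 2 from rfl, show n + 2 + 1 = n + 3 from rfl] at *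
    omega

lemma cassini (n : ℕ) :
    (Nat.fib (n + 1) : ℤ) * Nat.fib (n + 1) - Nat.fib n * Nat.fib (n + 2) = (-1) ^ n := by
  induction n with
  | zero => simp
  | succ n ih =>
    have h2 : (Nat.fib (n + 2) : ℤ) = Nat.fib n + Nat.fib (n + 1) := by
      rw [Nat.fib_add_two]; push_cast; ring
    have h3 : (Nat.fib (n + 3) : ℤ) = Nat.fib (n + 1) + Nat.fib (n + 2) := by
      rw [Nat.fib_add_two (n := n + 1)]; push_cast; ring
    rw [h3]
    have : (Nat.fib (n + 2) : ℤ) * Nat.fib (n + 2) -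
        Nat.fib (n + 1) * (Nat.fib (n + 1) + Nat.fib (n + 2)) =
        -((Nat.fib (n + 1) : ℤ) * Nat.fib (n + 1) - Nat.fib n * Nat.fib (n + 2)) := by
      rw [h2]; ring
    rw [this, ih]; ring

/-- For every Fibonacci-like integer sequence (indexed from 1),
(i) the sum of the first 3 terms is twice the third term, and
(ii) the sum of the first 4k+2 terms is L_{2k+1} times the (2k+3)rd term. -/
theorem fib_like_trick (x : ℕ → ℤ)
    (hrec : ∀ j, 3 ≤ j → x j = x (j - 1) + x (j - 2)) :
    (x 1 + x 2 + x 3 = 2 * x 3) ∧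
    (∀ k : ℕ, ∑ i ∈ Finset.Icc 1 (4 * k + 2), x i =
      (lucas (2 * k + 1) : ℤ) * x (2 * k + 3)) := by
  have h3 := hrec 3 (by norm_num)
  -- closed form
  have hx : ∀ n : ℕ, x (n + 1) =
      x 1 * ((Nat.fib (n + 1) : ℤ) - Nat.fib n) + x 2 * Nat.fib n := by
    intro n
    induction n using Nat.twoStepInduction with
    | zero => simp
    | one => simp
    | more n ih1 ih2 =>
      have hr := hrec (n + 3) (by omega)
      simp only [show n + 3 - 1 = n + 2 from rfl, show n + 3 - 2 = n + 1 from rfl] at hr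
      have ih2' : x (n + 2) = x 1 * ((Nat.fib (n + 2) : ℤ) - Nat.fib (n + 1)) +
          x 2 * Nat.fib (n + 1) := ih2
      have hf1 : (Nat.fib (n + 2) : ℤ) = Nat.fib n + Nat.fib (n + 1) := by
        rw [Nat.fib_add_two]; push_cast; ring
      have hf2 : (Nat.fib (n + 2 + 1) : ℤ) = Nat.fib (n + 1) + Nat.fib (n + 2) := by
        rw [show n + 2 + 1 = n + 1 + 2 from rfl, Nat.fib_add_two]; push_cast; ring
      show x (n + 3) = _
      rw [hr, ih1, ih2', hf2, hf1]; ring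
  -- sum formula
  have hsum : ∀ N : ℕ, ∑ i ∈ Finset.Icc 1 N, x i =
      x 1 * Nat.fib N + x 2 * ((Nat.fib (N + 1) : ℤ) - 1) := by
    intro N
    induction N with
    | zero => simp
    | succ N ih =>
      rw [Finset.sum_Icc_succ_top (by omega), ih, hx N,
        Nat.fib_add_two (n := N)]
      push_cast; ring
  constructor
  · rw [h3]; norm_num; ring
  · intro k
    rw [hsum, hx (2 * k + 2)]
    have hL : (lucas (2 * k + 1) : ℤ) = Nat.fib (2 * k) + Nat.fib (2 * k + 2) := by
      rw [lucas_eq_fib]; push_cast; ring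
    have e1 : (Nat.fib (4 * k + 2) : ℤ) =
        (Nat.fib (2 * k) + Nat.fib (2 * k + 2)) * Nat.fib (2 * k + 1) := by
      have := Nat.fib_add (2 * k) (2 * k + 1)
      have h : 2 * k + (2 * k + 1) + 1 = 4 * k + 2 := by ring
      rw [h] at this
      rw [this]; push_cast; ring
    have e2 : (Nat.fib (4 * k + 3) : ℤ) - 1 =
        (Nat.fib (2 * k) + Nat.fib (2 * k + 2)) * Nat.fib (2 * k + 2) := by
      have := Nat.fib_add (2 * k + 1) (2 * k + 1)
      have h : 2 * k + 1 + (2 * k + 1) + 1 = 4 * k + 3 := by ring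
      rw [h] at this
      have hc := cassini (2 * k)
      have hpow : ((-1 : ℤ)) ^ (2 * k) = 1 := by
        rw [pow_mul]; norm_num
      rw [hpow] at hc
      rw [this]; push_cast
      nlinarith [hc]
    have hfib : (Nat.fib (2 * k + 3) : ℤ) - Nat.fib (2 * k + 2) = Nat.fib (2 * k + 1) := by
      rw [Nat.fib_add_two (n := 2 * k + 1)]; push_cast; ring
    have h23 : 2 * k + 2 + 1 = 2 * k + 3 := rfl
    rw [h23, hL, e1, e2, hfib]
    ring
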